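/- Let X be a random d×d Hermitian matrix with E X = 0 and ‖X‖ ≤ c almost surely for some c > 0. Then for every θ ∈ ℝ, E[exp(θ X)] ⪯ exp( ψ_{P,c}(|θ|) · E[X²] ), and consequently log E[exp(θ X)] ⪯ ψ_{P,c}(|θ|) · E[X²], where ψ_{P,c}(u) := (e^{cu} − cu − 1)/c². -/

import Mathlib

set_option maxHeartbeats 2000000

open MeasureTheory ProbabilityTheory Matrix
open scoped ComplexOrder

noncomputable section

/-- `d × d` complex matrices. -/
abbrev Mat (d : ℕ) := Matrix (Fin d) (Fin d) ℂ

instance {d : ℕ} : MeasurableSpace (Mat d) :=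
  show MeasurableSpace (Fin d → Fin d → ℂ) from inferInstance

/-- Spectral functional calculus `f(A) = U f(D) U*` for a Hermitian matrix `A`
(junk value `0` if `A` is not Hermitian). -/
def matFun {d : ℕ} (f : ℝ → ℝ) (A : Mat d) : Mat d :=
  if h : A.IsHermitian then h.cfc f else 0

/-- Largest eigenvalue of a Hermitian matrix (junk value `0` if not Hermitian). -/
def lamMax {d : ℕ} (A : Mat d) : ℝ :=
  if h : A.IsHermitian then ⨆ i, h.eigenvalues i else 0

/-- Spectral (operator) norm of a Hermitian matrix: the largest absolute value of an
eigenvalue (junk value `0` if not Hermitian). -/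
def opNorm {d : ℕ} (A : Mat d) : ℝ :=
  if h : A.IsHermitian then ⨆ i, |h.eigenvalues i| else 0

/-- Real trace of a matrix. -/
def rtrace {d : ℕ} (A : Mat d) : ℝ := (Matrix.trace A).re

/-- Loewner partial order: `A ⪯ B` iff `B - A` is positive semidefinite. -/
def loewnerLE {d : ℕ} (A B : Mat d) : Prop := (B - A).PosSemidef

/-- Entrywise (Bochner) expectation of a random matrix. -/
def matInt {Ω : Type*} [MeasurableSpace Ω] (μ : Measure Ω) {d : ℕ} (X : Ω → Mat d) : Mat d :=
  Matrix.of fun p q => ∫ ω, X ω p q ∂μ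

/-- `φ(u) = e^u - u - 1`. -/
def phiFun (u : ℝ) : ℝ := Real.exp u - u - 1

/-- `ϕ(u) = cosh u - 1`. -/
def varphiFun (u : ℝ) : ℝ := Real.cosh u - 1

/-- `p(u) = min (-u) 1`. -/
def pFun (u : ℝ) : ℝ := min (-u) 1

end

noncomputable section SKAux

namespace SK

/-! ### Scalar inequalities -/

lemma phi_tsum (u : ℝ) : Real.exp u - u - 1 = ∑' n : ℕ, u ^ (n+2) / (n+2).factorial := by
  have h0 : Summable (fun n : ℕ => u ^ n / n.factorial) := Real.summable_pow_div_factorial u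
  have h1 : Summable (fun n : ℕ => u ^ (n+1) / (n+1).factorial) :=
    (summable_nat_add_iff 1).2 h0
  have e : Real.exp u = ∑' n : ℕ, u ^ n / n.factorial := by
    rw [Real.exp_eq_exp_ℝ, NormedSpace.exp_eq_tsum_div]
  rw [e, Summable.tsum_eq_zero_add h0, Summable.tsum_eq_zero_add h1]
  simp
  ring

lemma phi_summable (u : ℝ) : Summable (fun n : ℕ => u ^ (n+2) / (n+2).factorial) :=
  (summable_nat_add_iff 2).2 (Real.summable_pow_div_factorial u)

lemma phi_le {u t : ℝ} (ht : 0 < t) (h : |u| ≤ t) :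
    Real.exp u - u - 1 ≤ (Real.exp t - t - 1) * (u^2 / t^2) := by
  rw [phi_tsum, phi_tsum, ← tsum_mul_right]
  refine Summable.tsum_le_tsum (fun n => ?_) (phi_summable u) ((phi_summable t).mul_right _)
  have h1 : u ^ (n+2) ≤ |u| ^ (n+2) := le_abs_self _ |>.trans (by rw [abs_pow])
  have h2 : |u| ^ (n+2) = u^2 * |u| ^ n := by
    rw [pow_add, sq_abs]; ring
  have h3 : |u| ^ n ≤ t ^ n := pow_le_pow_left₀ (abs_nonneg u) h n
  have h4 : t ^ (n+2) / (n+2).factorial * (u^2/t^2) = u^2 * t^n / (n+2).factorial := by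
    field_simp
    ring
  rw [h4]
  have : u ^ (n+2) ≤ u^2 * t^n := by
    calc u ^ (n+2) ≤ |u| ^ (n+2) := h1
    _ = u^2 * |u|^n := h2
    _ ≤ u^2 * t^n := by nlinarith [sq_nonneg u]
  exact div_le_div_of_nonneg_right this (by positivity) |>.trans_eq rfl

lemma scalar_key {c : ℝ} (hc : 0 < c) (θ x : ℝ) (hx : |x| ≤ c) :
    Real.exp (θ * x) ≤ 1 + θ*x + ((Real.exp (c*|θ|) - c*|θ| - 1)/c^2) * x^2 := by
  rcases eq_or_ne θ 0 with rfl | hθ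
  · simp
  · have ht : 0 < c * |θ| := mul_pos hc (abs_pos.mpr hθ)
    have hu : |θ * x| ≤ c * |θ| := by
      rw [abs_mul]; rw [mul_comm]
      exact mul_le_mul_of_nonneg_right hx (abs_nonneg θ)
    have := phi_le ht hu
    have hxc : (θ*x)^2 / (c*|θ|)^2 = x^2/c^2 * (θ^2/θ^2) := by
      rw [mul_pow, mul_pow, sq_abs]; field_simp
    rw [div_self (by positivity), mul_one] at hxc
    rw [hxc] at this
    have h2 : (Real.exp (c*|θ|) - c*|θ| - 1) * (x^2/c^2)
        = ((Real.exp (c*|θ|) - c*|θ| - 1)/c^2) * x^2 := by ring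
    linarith [this, h2.ge]

lemma exp_lower {c : ℝ} (θ x : ℝ) (hx : |x| ≤ c) :
    Real.exp (-(c * |θ|)) ≤ Real.exp (θ * x) := by
  apply Real.exp_le_exp.mpr
  have : |θ * x| ≤ c * |θ| := by
    rw [abs_mul, mul_comm]; exact mul_le_mul_of_nonneg_right hx (abs_nonneg θ)
  linarith [neg_abs_le (θ*x)]

lemma psi_nonneg {c : ℝ} (hc : 0 < c) (θ : ℝ) :
    0 ≤ (Real.exp (c*|θ|) - c*|θ| - 1)/c^2 := by
  have h := Real.add_one_le_exp (c*|θ|)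
  have : 0 ≤ Real.exp (c*|θ|) - c*|θ| - 1 := by linarith
  positivity

/-! ### Functional calculus toolkit -/

variable {d : ℕ} {A : Mat d}

lemma contOn (f : ℝ → ℝ) (A : Mat d) : ContinuousOn f (spectrum ℝ A) := by
  rw [continuousOn_iff_continuous_restrict]
  exact continuous_of_discreteTopology

lemma cfc_entry (hA : A.IsHermitian) (f : ℝ → ℝ) (p q : Fin d) :
    hA.cfc f p q = ∑ i, (hA.eigenvectorUnitary : Mat d) p i * (f (hA.eigenvalues i) : ℂ)
      * (starRingEnd ℂ) ((hA.eigenvectorUnitary : Mat d) q i) := by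
  rw [Matrix.IsHermitian.cfc, Unitary.conjStarAlgAut_apply, star_eq_conjTranspose, Matrix.mul_apply]
  congr 1 with i
  rw [Matrix.mul_diagonal, Matrix.conjTranspose_apply]
  simp [mul_assoc, Complex.star_def]

lemma row_norm (hA : A.IsHermitian) (p : Fin d) :
    ∑ i, Complex.normSq ((hA.eigenvectorUnitary : Mat d) p i) = 1 := by
  have h : ((hA.eigenvectorUnitary : Mat d) * star (hA.eigenvectorUnitary : Mat d)) p p = 1 := by
    rw [(Matrix.mem_unitaryGroup_iff).mp hA.eigenvectorUnitary.2]
    simp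
  rw [Matrix.mul_apply] at h
  have : ∀ i, (hA.eigenvectorUnitary : Mat d) p i * (star (hA.eigenvectorUnitary : Mat d)) i p
      = (Complex.normSq ((hA.eigenvectorUnitary : Mat d) p i) : ℂ) := by
    intro i
    rw [star_eq_conjTranspose, Matrix.conjTranspose_apply]
    exact Complex.mul_conj _
  rw [Finset.sum_congr rfl (fun i _ => this i)] at h
  exact_mod_cast h

lemma entry_bound (hA : A.IsHermitian) (f : ℝ → ℝ) (K : ℝ)
    (hK : ∀ i, |f (hA.eigenvalues i)| ≤ K) (p q : Fin d) :
    ‖hA.cfc f p q‖ ≤ K := by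
  rw [cfc_entry]
  refine (norm_sum_le _ _).trans ?_
  have hKn : 0 ≤ K := le_trans (abs_nonneg _) (hK p)
  have key : ∀ i ∈ Finset.univ, ‖(hA.eigenvectorUnitary : Mat d) p i * (f (hA.eigenvalues i) : ℂ)
      * (starRingEnd ℂ) ((hA.eigenvectorUnitary : Mat d) q i)‖
      ≤ K * ((Complex.normSq ((hA.eigenvectorUnitary : Mat d) p i)
        + Complex.normSq ((hA.eigenvectorUnitary : Mat d) q i)) / 2) := by
    intro i _
    rw [norm_mul, norm_mul]
    set a := ‖(hA.eigenvectorUnitary : Mat d) p i‖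
    set b := ‖(hA.eigenvectorUnitary : Mat d) q i‖
    have ha : 0 ≤ a := norm_nonneg _
    have hb : 0 ≤ b := norm_nonneg _
    have h1 : ‖(f (hA.eigenvalues i) : ℂ)‖ = |f (hA.eigenvalues i)| := (Complex.norm_real _).trans (Real.norm_eq_abs _)
    have h2 : ‖(starRingEnd ℂ) ((hA.eigenvectorUnitary : Mat d) q i)‖ = b := by
      simp [b]
    rw [h1, h2]
    have hab : a * b ≤ (a^2 + b^2)/2 := by nlinarith [sq_nonneg (a - b)]
    have hsq : Complex.normSq ((hA.eigenvectorUnitary : Mat d) p i) = a^2 := by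
      rw [← Complex.sq_norm]
    have hsqb : Complex.normSq ((hA.eigenvectorUnitary : Mat d) q i) = b^2 := by
      rw [← Complex.sq_norm]
    rw [hsq, hsqb]
    calc a * |f (hA.eigenvalues i)| * b ≤ a * K * b := by
          apply mul_le_mul_of_nonneg_right _ hb
          exact mul_le_mul_of_nonneg_left (hK i) ha
      _ = K * (a * b) := by ring
      _ ≤ K * ((a^2 + b^2)/2) := mul_le_mul_of_nonneg_left hab hKn
  refine (Finset.sum_le_sum key).trans ?_
  rw [← Finset.mul_sum]
  have : ∑ i, ((Complex.normSq ((hA.eigenvectorUnitary : Mat d) p i)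
      + Complex.normSq ((hA.eigenvectorUnitary : Mat d) q i)) / 2) = 1 := by
    rw [← Finset.sum_div, Finset.sum_add_distrib, row_norm hA p, row_norm hA q]
    norm_num
  rw [this, mul_one]

lemma cfc_psd (hA : A.IsHermitian) (f : ℝ → ℝ) (hf : ∀ i, 0 ≤ f (hA.eigenvalues i)) :
    (hA.cfc f).PosSemidef := by
  rw [Matrix.IsHermitian.cfc, Unitary.conjStarAlgAut_apply, star_eq_conjTranspose]
  apply Matrix.PosSemidef.mul_mul_conjTranspose_same
  rw [Matrix.posSemidef_diagonal_iff]
  intro i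
  simpa using Complex.zero_le_real.mpr (hf i)

lemma cfc_loewner (hA : A.IsHermitian) (f g : ℝ → ℝ)
    (h : ∀ i, f (hA.eigenvalues i) ≤ g (hA.eigenvalues i)) :
    loewnerLE (hA.cfc f) (hA.cfc g) := by
  have : hA.cfc g - hA.cfc f = hA.cfc (fun x => g x - f x) := by
    rw [← hA.cfc_eq, ← hA.cfc_eq, ← hA.cfc_eq]
    rw [← cfc_sub _ _ A (contOn g A) (contOn f A)]
  rw [loewnerLE, this]
  exact cfc_psd hA _ (fun i => sub_nonneg.mpr (h i))

lemma smul_isHermitian (hA : A.IsHermitian) (θ : ℝ) : (θ • A).IsHermitian := by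
  unfold Matrix.IsHermitian
  rw [Matrix.conjTranspose_smul, star_trivial, hA.eq]

lemma matFun_eq (f : ℝ → ℝ) (hA : A.IsHermitian) : matFun f A = cfc f A := by
  rw [matFun, dif_pos hA, hA.cfc_eq]

lemma matFun_exp_smul (hA : A.IsHermitian) (θ : ℝ) :
    matFun Real.exp (θ • A) = cfc (fun x : ℝ => Real.exp (θ * x)) A := by
  have h := cfc_comp_smul θ Real.exp A (Real.continuous_exp.continuousOn) hA.isSelfAdjoint
  rw [matFun_eq Real.exp (smul_isHermitian hA θ), ← h]
  rfl

lemma cfc_poly (hA : A.IsHermitian) (θ ψ : ℝ) :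
    cfc (fun x : ℝ => 1 + θ*x + ψ*x^2) A = 1 + θ • A + ψ • A^2 := by
  have hadd := cfc_add (a := A) (fun y : ℝ => 1 + θ*y) (fun y : ℝ => ψ*y^2)
    (by fun_prop) (by fun_prop)
  beta_reduce at hadd
  rw [hadd]
  have h2 : cfc (fun y : ℝ => 1 + θ*y) A = 1 + θ • A := by
    have hadd2 := cfc_add (a := A) (fun _ : ℝ => (1:ℝ)) (fun z : ℝ => θ*z)
      (by fun_prop) (by fun_prop)
    beta_reduce at hadd2
    rw [hadd2, cfc_const 1 A hA.isSelfAdjoint, cfc_const_mul_id θ A hA.isSelfAdjoint,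
      _root_.map_one]
  have h3 : cfc (fun y : ℝ => ψ*y^2) A = ψ • A^2 := by
    rw [cfc_const_mul ψ (fun y : ℝ => y^2) A (by fun_prop), cfc_pow_id A 2 hA.isSelfAdjoint]
  rw [h2, h3]

lemma cfc_sub_one (hA : A.IsHermitian) :
    cfc (fun x : ℝ => x - 1) A = A - 1 := by
  rw [cfc_sub _ _ A (contOn _ _) (contOn _ _), cfc_id' ℝ A hA.isSelfAdjoint,
    cfc_const 1 A hA.isSelfAdjoint, _root_.map_one]

lemma cfc_one_add (hA : A.IsHermitian) :
    cfc (fun x : ℝ => 1 + x) A = 1 + A := by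
  have hadd := cfc_add (a := A) (fun _ : ℝ => (1:ℝ)) (fun z : ℝ => z)
    (by fun_prop) (by fun_prop)
  beta_reduce at hadd
  rw [hadd, cfc_const 1 A hA.isSelfAdjoint, cfc_id' ℝ A hA.isSelfAdjoint, _root_.map_one]

lemma cfc_const_eq (hA : A.IsHermitian) (ε : ℝ) :
    cfc (fun _ : ℝ => ε) A = ε • (1 : Mat d) := by
  rw [cfc_const ε A hA.isSelfAdjoint, Algebra.algebraMap_eq_smul_one]

lemma cfc_exp_eq (hA : A.IsHermitian) :
    cfc Real.exp A = NormedSpace.exp A := by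
  letI : NormedRing (Mat d) := Matrix.linftyOpNormedRing
  letI : NormedAlgebra ℝ (Mat d) := Matrix.linftyOpNormedAlgebra
  exact @CFC.real_exp_eq_normedSpace_exp (Mat d) _ _ _ Matrix.IsHermitian.instContinuousFunctionalCalculus A hA.isSelfAdjoint

lemma cfc_isHermitian (f : ℝ → ℝ) (A : Mat d) : (cfc f A).IsHermitian :=
  cfc_predicate f A

instance {d : ℕ} : BorelSpace (Mat d) := Pi.borelSpace

lemma exp_measurable (θ : ℝ) : Measurable (fun A : Mat d => NormedSpace.exp (θ • A)) := by
  letI : NormedRing (Mat d) := Matrix.linftyOpNormedRing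
  letI : NormedAlgebra ℝ (Mat d) := Matrix.linftyOpNormedAlgebra
  letI : NormedAlgebra ℚ (Mat d) := Matrix.linftyOpNormedAlgebra
  have h1 : Continuous (fun A : Mat d => NormedSpace.exp (θ • A)) :=
    NormedSpace.exp_continuous.comp (continuous_const_smul θ)
  exact h1.measurable

/-! ### Loewner order facts -/

lemma loewner_trans {A B C : Mat d} (h1 : loewnerLE A B) (h2 : loewnerLE B C) :
    loewnerLE A C := by
  have := h2.add h1
  rw [loewnerLE, show C - A = (C - B) + (B - A) by abel]
  exact this

lemma posdef_of_lower {N : Mat d} {ε : ℝ} (hε : 0 < ε)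
    (h : (N - ε • 1).PosSemidef) : N.PosDef := by
  have hNh : N.IsHermitian := by
    have h1 := h.1.add (smul_isHermitian Matrix.isHermitian_one ε)
    simpa using h1
  refine Matrix.posDef_iff_dotProduct_mulVec.mpr ⟨hNh, fun x hx => ?_⟩
  have h2 := h.dotProduct_mulVec_nonneg x
  have h3 : 0 < star x ⬝ᵥ x := Matrix.dotProduct_star_self_pos_iff.mpr hx
  have e1 : (ε • (1 : Mat d)) *ᵥ x = ε • x := by
    rw [Matrix.smul_mulVec, Matrix.one_mulVec]
  have e : star x ⬝ᵥ (N *ᵥ x)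
      = star x ⬝ᵥ ((N - ε • 1) *ᵥ x) + (ε : ℂ) * (star x ⬝ᵥ x) := by
    rw [Matrix.sub_mulVec, dotProduct_sub, e1, dotProduct_smul]
    have : (ε : ℂ) * (star x ⬝ᵥ x) = ε • (star x ⬝ᵥ x) := Complex.real_smul.symm
    rw [this]; ring
  rw [e]
  have hpos : 0 < (ε : ℂ) * (star x ⬝ᵥ x) := by
    rw [Complex.lt_def] at h3 ⊢
    obtain ⟨h3re, h3im⟩ := h3
    constructor
    · simp only [Complex.zero_re, Complex.mul_re, Complex.ofReal_re, Complex.ofReal_im]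
      simp only [Complex.zero_re] at h3re
      simp only [Complex.zero_im] at h3im
      rw [← h3im]
      simp
      positivity
    · simp only [Complex.zero_im, Complex.mul_im, Complex.ofReal_re, Complex.ofReal_im]
      simp only [Complex.zero_im] at h3im
      rw [← h3im]
      simp
  calc (0:ℂ) < (ε : ℂ) * (star x ⬝ᵥ x) := hpos
    _ ≤ star x ⬝ᵥ ((N - ε • 1) *ᵥ x) + (ε : ℂ) * (star x ⬝ᵥ x) := le_add_of_nonneg_left h2

/-! ### Integration toolkit -/

variable {Ω : Type*} [MeasurableSpace Ω] {μ : Measure Ω} {Y Z : Ω → Mat d}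

lemma integral_nonneg_complex {f : Ω → ℂ} (hf : Integrable f μ) (h : ∀ᵐ ω ∂μ, 0 ≤ f ω) :
    0 ≤ ∫ ω, f ω ∂μ := by
  rw [Complex.le_def]
  constructor
  · simp only [Complex.zero_re]
    have hre := integral_re hf
    simp only [RCLike.re_to_complex] at hre
    rw [← hre]
    apply integral_nonneg_of_ae
    filter_upwards [h] with ω hω
    rw [Complex.le_def] at hω
    simpa using hω.1
  · simp only [Complex.zero_im]
    have him := integral_im hf
    simp only [RCLike.im_to_complex] at him
    rw [← him]
    have : ∀ᵐ ω ∂μ, (f ω).im = (0 : ℝ) := by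
      filter_upwards [h] with ω hω
      rw [Complex.le_def] at hω
      simpa using hω.2.symm
    rw [integral_congr_ae this]
    simp

lemma matInt_quadform (hint : ∀ p q, Integrable (fun ω => Y ω p q) μ) (x : Fin d → ℂ) :
    star x ⬝ᵥ (matInt μ Y *ᵥ x) = ∫ ω, star x ⬝ᵥ (Y ω *ᵥ x) ∂μ := by
  have h1 : ∀ (p q : Fin d), Integrable (fun ω => Y ω p q * x q) μ :=
    fun p q => (hint p q).mul_const _
  have h2 : ∀ p, Integrable (fun ω => ∑ q, Y ω p q * x q) μ :=
    fun p => integrable_finset_sum _ (fun q _ => h1 p q)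
  symm
  calc ∫ ω, star x ⬝ᵥ (Y ω *ᵥ x) ∂μ
      = ∫ ω, ∑ p, star (x p) * ∑ q, Y ω p q * x q ∂μ := by
        simp [dotProduct, Matrix.mulVec]
    _ = ∑ p, ∫ ω, star (x p) * ∑ q, Y ω p q * x q ∂μ :=
        integral_finset_sum _ (fun p _ => (h2 p).const_mul _)
    _ = ∑ p, star (x p) * ∫ ω, ∑ q, Y ω p q * x q ∂μ :=
        Finset.sum_congr rfl fun p _ => integral_const_mul _ _
    _ = ∑ p, star (x p) * ∑ q, (∫ ω, Y ω p q ∂μ) * x q := by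
        refine Finset.sum_congr rfl fun p _ => ?_
        rw [integral_finset_sum _ (fun q _ => h1 p q)]
        exact congrArg _ (Finset.sum_congr rfl fun q _ => integral_mul_const _ _)
    _ = star x ⬝ᵥ (matInt μ Y *ᵥ x) := by
        simp [dotProduct, Matrix.mulVec, matInt]

lemma quadform_integrable (hint : ∀ p q, Integrable (fun ω => Y ω p q) μ) (x : Fin d → ℂ) :
    Integrable (fun ω => star x ⬝ᵥ (Y ω *ᵥ x)) μ := by
  simp only [dotProduct, Matrix.mulVec, Pi.star_apply]
  apply integrable_finset_sum
  intro p _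
  apply Integrable.const_mul
  apply integrable_finset_sum
  intro q _
  exact (hint p q).mul_const _

lemma matInt_isHermitian (hint : ∀ p q, Integrable (fun ω => Y ω p q) μ)
    (h : ∀ᵐ ω ∂μ, (Y ω).IsHermitian) : (matInt μ Y).IsHermitian := by
  unfold Matrix.IsHermitian
  ext p q
  rw [Matrix.conjTranspose_apply, matInt, Matrix.of_apply, Matrix.of_apply,
    show (star (∫ ω, Y ω q p ∂μ) : ℂ) = (starRingEnd ℂ) (∫ ω, Y ω q p ∂μ) from rfl,
    ← integral_conj]
  apply integral_congr_ae
  filter_upwards [h] with ω hω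
  exact hω.apply p q

lemma matInt_psd (hint : ∀ p q, Integrable (fun ω => Y ω p q) μ)
    (h : ∀ᵐ ω ∂μ, (Y ω).PosSemidef) : (matInt μ Y).PosSemidef := by
  rw [Matrix.posSemidef_iff_dotProduct_mulVec]
  constructor
  · exact matInt_isHermitian hint (h.mono fun ω hω => hω.1)
  · intro x
    rw [matInt_quadform hint x]
    apply integral_nonneg_complex (quadform_integrable hint x)
    filter_upwards [h] with ω hω
    exact hω.dotProduct_mulVec_nonneg x

lemma matInt_loewner (hY : ∀ p q, Integrable (fun ω => Y ω p q) μ)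
    (hZ : ∀ p q, Integrable (fun ω => Z ω p q) μ)
    (h : ∀ᵐ ω ∂μ, loewnerLE (Y ω) (Z ω)) : loewnerLE (matInt μ Y) (matInt μ Z) := by
  have e : matInt μ Z - matInt μ Y = matInt μ (fun ω => Z ω - Y ω) := by
    ext p q
    simp only [matInt, Matrix.sub_apply, Matrix.of_apply]
    rw [integral_sub (hZ p q) (hY p q)]
  rw [loewnerLE, e]
  exact matInt_psd (fun p q => (hZ p q).sub (hY p q)) h

lemma matInt_const [IsProbabilityMeasure μ] (C : Mat d) : matInt μ (fun _ => C) = C := by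
  ext p q
  simp [matInt, integral_const, measure_univ]

end SK

end SKAux

/-- For a mean-zero random Hermitian matrix `X` with `‖X‖ ≤ c` a.s.,
`E[exp(θX)] ⪯ exp(ψ_{P,c}(|θ|) E[X²])` and consequently
`log E[exp(θX)] ⪯ ψ_{P,c}(|θ|) E[X²]`, where `ψ_{P,c}(u) = (e^{cu} - cu - 1)/c²`. -/
theorem statement9 {d : ℕ} (hd : 1 ≤ d)
    {Ω : Type*} [MeasurableSpace Ω] (μ : Measure Ω) [IsProbabilityMeasure μ]
    (X : Ω → Mat d)
    (hmeas : Measurable X)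
    (hint : ∀ p q, Integrable (fun ω => X ω p q) μ)
    (hherm : ∀ ω, (X ω).IsHermitian)
    (hmean : matInt μ X = 0)
    (c : ℝ) (hc : 0 < c)
    (hbdd : ∀ᵐ ω ∂μ, opNorm (X ω) ≤ c) :
    ∀ θ : ℝ,
      loewnerLE (matInt μ (fun ω => matFun Real.exp (θ • X ω)))
        (matFun Real.exp
          (((Real.exp (c * |θ|) - c * |θ| - 1) / c ^ 2) • matInt μ (fun ω => (X ω) ^ 2))) ∧
      loewnerLE (matFun Real.log (matInt μ (fun ω => matFun Real.exp (θ • X ω))))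
        (((Real.exp (c * |θ|) - c * |θ| - 1) / c ^ 2) • matInt μ (fun ω => (X ω) ^ 2)) := by
  intro θ
  set ψ := (Real.exp (c * |θ|) - c * |θ| - 1) / c ^ 2 with hψdef
  have hψ : 0 ≤ ψ := SK.psi_nonneg hc θ
  set fθ : ℝ → ℝ := fun x => Real.exp (θ * x) with hfθ
  -- a.e. eigenvalue bound
  have heig : ∀ᵐ ω ∂μ, ∀ i, |(hherm ω).eigenvalues i| ≤ c := by
    filter_upwards [hbdd] with ω hω i
    rw [opNorm, dif_pos (hherm ω)] at hω
    exact le_trans (le_ciSup (f := fun j => |(hherm ω).eigenvalues j|)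
      (Set.Finite.bddAbove (Set.finite_range _)) i) hω
  -- the exponential process
  have hMcfc : ∀ ω, matFun Real.exp (θ • X ω) = (hherm ω).cfc fθ :=
    fun ω => (SK.matFun_exp_smul (hherm ω) θ).trans ((hherm ω).cfc_eq fθ)
  have hMexp : ∀ ω, matFun Real.exp (θ • X ω) = NormedSpace.exp (θ • X ω) := fun ω => by
    rw [SK.matFun_eq Real.exp (SK.smul_isHermitian (hherm ω) θ),
      SK.cfc_exp_eq (SK.smul_isHermitian (hherm ω) θ)]
  have hMmeas : Measurable (fun ω => matFun Real.exp (θ • X ω)) := by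
    rw [funext hMexp]
    exact (SK.exp_measurable θ).comp hmeas
  have hMint : ∀ p q, Integrable (fun ω => matFun Real.exp (θ • X ω) p q) μ := by
    intro p q
    have hm : Measurable (fun ω => matFun Real.exp (θ • X ω) p q) :=
      (measurable_pi_apply q).comp ((measurable_pi_apply p).comp hMmeas)
    refine Integrable.mono' (integrable_const (Real.exp (c * |θ|)))
      hm.aestronglyMeasurable ?_
    filter_upwards [heig] with ω hω
    rw [hMcfc ω]
    apply SK.entry_bound (hherm ω) fθ
    intro i
    rw [abs_of_pos (Real.exp_pos _)]
    apply Real.exp_le_exp.mpr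
    calc θ * (hherm ω).eigenvalues i ≤ |θ * (hherm ω).eigenvalues i| := le_abs_self _
      _ = |θ| * |(hherm ω).eigenvalues i| := abs_mul _ _
      _ ≤ |θ| * c := mul_le_mul_of_nonneg_left (hω i) (abs_nonneg θ)
      _ = c * |θ| := mul_comm _ _
  -- X² facts
  have hX2cfc : ∀ ω, X ω ^ 2 = (hherm ω).cfc (fun x => x^2) := fun ω => by
    rw [← (hherm ω).cfc_eq]
    exact (cfc_pow_id (X ω) 2 (hherm ω).isSelfAdjoint).symm
  have hX2int : ∀ p q, Integrable (fun ω => (X ω ^ 2) p q) μ := by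
    intro p q
    have he : ∀ ω, (X ω ^ 2) p q = ∑ r, X ω p r * X ω r q := fun ω => by
      rw [pow_two, Matrix.mul_apply]
    have hm : Measurable (fun ω => (X ω ^ 2) p q) := by
      simp only [he]
      exact Finset.measurable_sum _ fun r _ =>
        ((measurable_pi_apply r).comp ((measurable_pi_apply p).comp hmeas)).mul
          ((measurable_pi_apply q).comp ((measurable_pi_apply r).comp hmeas))
    refine Integrable.mono' (integrable_const (c^2)) hm.aestronglyMeasurable ?_
    filter_upwards [heig] with ω hω
    rw [hX2cfc ω]
    apply SK.entry_bound (hherm ω) _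
    intro i
    rw [abs_pow]
    exact pow_le_pow_left₀ (abs_nonneg _) (hω i) 2
  set V := matInt μ (fun ω => X ω ^ 2) with hVdef
  have hVherm : V.IsHermitian :=
    SK.matInt_isHermitian hX2int (Filter.Eventually.of_forall fun ω => (hherm ω).pow 2)
  have hBherm : (ψ • V).IsHermitian := SK.smul_isHermitian hVherm ψ
  set N := matInt μ (fun ω => matFun Real.exp (θ • X ω)) with hNdef
  have hNherm : N.IsHermitian :=
    SK.matInt_isHermitian hMint (Filter.Eventually.of_forall fun ω => by
      rw [hMcfc ω, ← (hherm ω).cfc_eq]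
      exact SK.cfc_isHermitian fθ (X ω))
  -- Step A pointwise
  have key1 : ∀ᵐ ω ∂μ, loewnerLE (matFun Real.exp (θ • X ω))
      ((1 : Mat d) + θ • X ω + ψ • (X ω ^ 2)) := by
    filter_upwards [heig] with ω hω
    have hpoly : (1 : Mat d) + θ • X ω + ψ • (X ω ^ 2)
        = (hherm ω).cfc (fun x => 1 + θ*x + ψ*x^2) := by
      rw [← (hherm ω).cfc_eq]
      exact (SK.cfc_poly (hherm ω) θ ψ).symm
    rw [hMcfc ω, hpoly]
    exact SK.cfc_loewner (hherm ω) _ _ (fun i => SK.scalar_key hc θ _ (hω i))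
  have hPint : ∀ p q, Integrable
      (fun ω => ((1 : Mat d) + θ • X ω + ψ • (X ω ^ 2)) p q) μ := by
    intro p q
    simp only [Matrix.add_apply, Matrix.smul_apply]
    exact ((integrable_const _).add ((hint p q).smul θ)).add ((hX2int p q).smul ψ)
  have stepA' : loewnerLE N (matInt μ (fun ω => (1 : Mat d) + θ • X ω + ψ • (X ω ^ 2))) :=
    SK.matInt_loewner hMint hPint key1
  have hPeq : matInt μ (fun ω => (1 : Mat d) + θ • X ω + ψ • (X ω ^ 2))
      = (1 : Mat d) + ψ • V := by
    ext p q
    simp only [matInt, Matrix.of_apply, Matrix.add_apply, Matrix.smul_apply]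
    have i1 : Integrable (fun ω => (1 : Mat d) p q + θ • X ω p q) μ :=
      (integrable_const _).add ((hint p q).smul θ)
    have e1 : ∫ ω, ((1 : Mat d) p q + θ • X ω p q + ψ • (X ω ^ 2) p q) ∂μ
        = (∫ ω, ((1 : Mat d) p q + θ • X ω p q) ∂μ) + ∫ ω, ψ • (X ω ^ 2) p q ∂μ :=
      integral_add i1 ((hX2int p q).smul ψ)
    have e2 : ∫ ω, ((1 : Mat d) p q + θ • X ω p q) ∂μ
        = (∫ ω, ((1 : Mat d) p q : ℂ) ∂μ) + ∫ ω, θ • X ω p q ∂μ :=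
      integral_add (integrable_const _) ((hint p q).smul θ)
    have e3 : ∫ ω, (θ • X ω p q : ℂ) ∂μ = θ • ∫ ω, X ω p q ∂μ := integral_smul θ _
    have e4 : ∫ ω, (ψ • (X ω ^ 2) p q : ℂ) ∂μ = ψ • ∫ ω, (X ω ^ 2) p q ∂μ := integral_smul ψ _
    rw [e1, e2, e3, e4, integral_const]
    rw [show (∫ ω, X ω p q ∂μ) = (matInt μ X) p q from rfl, hmean]
    simp [measure_univ]
    exact Or.inl rfl
  have stepA : loewnerLE N ((1 : Mat d) + ψ • V) := hPeq ▸ stepA'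
  -- Step C : 1 + B ⪯ exp B
  have stepC : loewnerLE ((1 : Mat d) + ψ • V) (matFun Real.exp (ψ • V)) := by
    rw [SK.matFun_eq Real.exp hBherm]
    have h1 : (1 : Mat d) + ψ • V = hBherm.cfc (fun x => 1 + x) := by
      rw [← hBherm.cfc_eq]
      exact (SK.cfc_one_add hBherm).symm
    rw [hBherm.cfc_eq Real.exp, h1]
    refine SK.cfc_loewner hBherm _ _ (fun i => ?_)
    show 1 + hBherm.eigenvalues i ≤ Real.exp (hBherm.eigenvalues i)
    linarith [Real.add_one_le_exp (hBherm.eigenvalues i)]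
  have first : loewnerLE N (matFun Real.exp (ψ • V)) := SK.loewner_trans stepA stepC
  -- N is positive definite
  set ε := Real.exp (-(c * |θ|)) with hεdef
  have key2 : ∀ᵐ ω ∂μ, loewnerLE (ε • (1 : Mat d)) (matFun Real.exp (θ • X ω)) := by
    filter_upwards [heig] with ω hω
    have hconst : ε • (1 : Mat d) = (hherm ω).cfc (fun _ => ε) := by
      rw [← (hherm ω).cfc_eq]
      exact (SK.cfc_const_eq (hherm ω) ε).symm
    rw [hMcfc ω, hconst]
    exact SK.cfc_loewner (hherm ω) _ _ (fun i => SK.exp_lower θ _ (hω i))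
  have hNlow : loewnerLE (ε • (1 : Mat d)) N := by
    have h := SK.matInt_loewner (Y := fun _ => ε • (1 : Mat d)) (Z := fun ω => matFun Real.exp (θ • X ω))
      (fun p q => integrable_const _) hMint key2
    rwa [SK.matInt_const] at h
  have hNpd : N.PosDef := SK.posdef_of_lower (Real.exp_pos _) hNlow
  -- log step
  have hlogN : matFun Real.log N = cfc Real.log N := SK.matFun_eq Real.log hNherm
  have hlog_le : loewnerLE (matFun Real.log N) (N - 1) := by
    rw [hlogN, hNherm.cfc_eq Real.log]
    have h1 : N - 1 = hNherm.cfc (fun x => x - 1) := by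
      rw [← hNherm.cfc_eq]
      exact (SK.cfc_sub_one hNherm).symm
    rw [h1]
    exact SK.cfc_loewner hNherm _ _ (fun i =>
      Real.log_le_sub_one_of_pos (hNpd.eigenvalues_pos i))
  have hshift : loewnerLE (N - 1) (ψ • V) := by
    rw [loewnerLE, show ψ • V - (N - 1) = (1 : Mat d) + ψ • V - N by abel]
    exact stepA
  exact ⟨first, SK.loewner_trans hlog_le hshift⟩
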